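/- For a positive definite matrix Ψ = λI + Σ_{k=1}^T v_k v_kᵀ with ‖v_k‖₂ ≤ C, the determinant satisfies det(Ψ) ≤ (λ + T C² / d)^d, by the AM–GM inequality applied to the eigenvalues together with the trace bound tr(Ψ) ≤ λ d + T C². -/

import Mathlib

open Matrix BigOperators

lemma trace_eq_sum_eigenvalues' {d : ℕ} {A : Matrix (Fin d) (Fin d) ℝ}
    (hA : A.IsHermitian) : A.trace = ∑ i, hA.eigenvalues i := by
  conv_lhs => rw [hA.spectral_theorem, Unitary.conjStarAlgAut_apply]
  rw [trace_mul_comm, ← mul_assoc, Unitary.coe_star_mul_self, one_mul, trace_diagonal]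
  simp

lemma trace_vecMulVec' {d : ℕ} (w v : Fin d → ℝ) :
    (vecMulVec w v).trace = w ⬝ᵥ v := by
  simp [Matrix.trace, vecMulVec, dotProduct, Matrix.diag]

lemma posSemidef_vecMulVec' {d : ℕ} (v : Fin d → ℝ) :
    (vecMulVec v v).PosSemidef := by
  rw [vecMulVec_eq Unit]
  have : replicateRow Unit v = (replicateCol Unit v)ᴴ := by
    ext i j; simp [conjTranspose]
  rw [this]
  exact posSemidef_self_mul_conjTranspose _

/-- For `Ψ = λI + Σ_{k<T} v_k v_kᵀ` with `‖v_k‖₂² ≤ C²` and `λ > 0`,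
`det Ψ ≤ (λ + T C² / d)^d`. -/
theorem det_le_of_trace_bound
    (d T : ℕ) (hd : 0 < d) (lam C : ℝ) (hlam : 0 < lam)
    (v : Fin T → (Fin d → ℝ)) (hv : ∀ k, v k ⬝ᵥ v k ≤ C ^ 2) :
    (lam • (1 : Matrix (Fin d) (Fin d) ℝ) + ∑ k, vecMulVec (v k) (v k)).det ≤
      (lam + (T : ℝ) * C ^ 2 / (d : ℝ)) ^ d := by
  set M := lam • (1 : Matrix (Fin d) (Fin d) ℝ) + ∑ k, vecMulVec (v k) (v k) with hMdef
  have hdpos : (0 : ℝ) < d := by exact_mod_cast hd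
  have hPSD : M.PosSemidef := by
    apply Matrix.PosSemidef.add
    · have : lam • (1 : Matrix (Fin d) (Fin d) ℝ) = diagonal (fun _ => lam) := by
        rw [smul_one_eq_diagonal]
      rw [this]
      exact Matrix.PosSemidef.diagonal (fun _ => hlam.le)
    · exact Finset.sum_induction _ _ (fun _ _ h1 h2 => h1.add h2) Matrix.PosSemidef.zero
        (fun k _ => posSemidef_vecMulVec' (v k))
  have hH : M.IsHermitian := hPSD.isHermitian
  set μ : Fin d → ℝ := hH.eigenvalues with hμ
  have hμ0 : ∀ i, 0 ≤ μ i := fun i => hPSD.eigenvalues_nonneg i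
  -- trace bound
  have htrace : M.trace ≤ lam * d + T * C ^ 2 := by
    rw [hMdef, trace_add, trace_smul, trace_one, trace_sum]
    simp only [Fintype.card_fin, smul_eq_mul]
    gcongr
    calc ∑ k, (vecMulVec (v k) (v k)).trace = ∑ k : Fin T, v k ⬝ᵥ v k := by
          simp [trace_vecMulVec']
      _ ≤ ∑ _k : Fin T, C ^ 2 := Finset.sum_le_sum fun k _ => hv k
      _ = T * C ^ 2 := by simp [mul_comm]
  have hsum : ∑ i, μ i ≤ lam * d + T * C ^ 2 := by
    rw [← trace_eq_sum_eigenvalues' hH]; exact htrace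
  -- det = product of eigenvalues
  have hdet : M.det = ∏ i, μ i := by
    have := hH.det_eq_prod_eigenvalues
    exact_mod_cast this
  rw [hdet]
  -- AM-GM
  have hAMGM : ∏ i, (μ i) ^ ((d : ℝ)⁻¹) ≤ ∑ i, (d : ℝ)⁻¹ * μ i := by
    apply Real.geom_mean_le_arith_mean_weighted
    · intro i _; positivity
    · simp [Finset.card_univ, mul_comm]
      field_simp
    · intro i _; exact hμ0 i
  have h1 : (0:ℝ) ≤ ∏ i, (μ i) ^ ((d:ℝ)⁻¹) :=
    Finset.prod_nonneg fun i _ => Real.rpow_nonneg (hμ0 i) _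
  have h2 : (∏ i, (μ i) ^ ((d:ℝ)⁻¹)) ^ d = ∏ i, μ i := by
    rw [← Finset.prod_pow]
    refine Finset.prod_congr rfl fun i _ => ?_
    rw [← Real.rpow_natCast ((μ i) ^ ((d:ℝ)⁻¹)) d, ← Real.rpow_mul (hμ0 i),
      inv_mul_cancel₀ (ne_of_gt hdpos), Real.rpow_one]
  have hsum2 : ∑ i, (d : ℝ)⁻¹ * μ i ≤ lam + (T : ℝ) * C ^ 2 / (d : ℝ) := by
    rw [← Finset.mul_sum]
    rw [inv_mul_le_iff₀ hdpos]
    calc ∑ i, μ i ≤ lam * d + T * C ^ 2 := hsum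
      _ = (d:ℝ) * (lam + (T : ℝ) * C ^ 2 / (d : ℝ)) := by field_simp
  have hsum2nonneg : (0:ℝ) ≤ ∑ i, (d : ℝ)⁻¹ * μ i :=
    Finset.sum_nonneg fun i _ => mul_nonneg (by positivity) (hμ0 i)
  calc ∏ i, μ i = (∏ i, (μ i) ^ ((d:ℝ)⁻¹)) ^ d := h2.symm
    _ ≤ (∑ i, (d : ℝ)⁻¹ * μ i) ^ d := pow_le_pow_left₀ h1 hAMGM d
    _ ≤ (lam + (T : ℝ) * C ^ 2 / (d : ℝ)) ^ d := pow_le_pow_left₀ hsum2nonneg hsum2 d
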